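/- Let T > 0, θ > 0 and C ≥ 0. Let 𝒞 be the space of continuous periodic functions ℝ² → ℝ with the supremum norm ‖·‖_∞, and suppose that for each 0 ≤ s ≤ t ≤ T a linear map P_{s,t} : 𝒞 → 𝒞 is given such that: (i) P_{s,s} = Id and P_{t,u} ∘ P_{s,t} = P_{s,u} whenever 0 ≤ s ≤ t ≤ u ≤ T; (ii) if f ≥ 0 then P_{s,t} f ≥ 0; (iii) ‖P_{s,t} f − e^{(t−s)Δ} f‖_∞ ≤ C (t−s)^θ ‖f‖_∞ for all f ∈ 𝒞 and 0 ≤ s < t ≤ T. Then a strong maximum principle holds: for every f ∈ 𝒞 with f ≥ 0 and f not identically zero, and for every t ∈ (0,T] and x ∈ ℝ², one has (P_{0,t} f)(x) > 0. -/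

import Mathlib

set_option maxHeartbeats 1000000


open MeasureTheory

/-- A function on `ℝ²` is periodic: invariant under translation by `2πk`,
`k ∈ ℤ²`. -/
def Periodic2 (f : ℝ × ℝ → ℝ) : Prop :=
  ∀ (k₁ k₂ : ℤ) (x y : ℝ), f (x + 2 * Real.pi * k₁, y + 2 * Real.pi * k₂) = f (x, y)

/-- Membership in `𝒞`: continuous periodic functions `ℝ² → ℝ`. -/
def PerCont (f : ℝ × ℝ → ℝ) : Prop := Continuous f ∧ Periodic2 f

/-- The heat semigroup `e^{tΔ}` on `ℝ²` (for `t > 0`), given by convolution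
with the heat kernel `p_t(x) = (4πt)⁻¹ exp(-|x|²/(4t))`. -/
noncomputable def heatOp (t : ℝ) (f : ℝ × ℝ → ℝ) : ℝ × ℝ → ℝ := fun x =>
  ∫ y : ℝ × ℝ, (4 * Real.pi * t)⁻¹ *
    Real.exp (-((x.1 - y.1) ^ 2 + (x.2 - y.2) ^ 2) / (4 * t)) * f y

/-- The supremum norm. -/
noncomputable def supNorm (f : ℝ × ℝ → ℝ) : ℝ := ⨆ x : ℝ × ℝ, |f x|

lemma clamp_lem (x p ρ s : ℝ) (hs : 0 ≤ s) (hρ : s ≤ ρ) (hx : |x - p| ≤ ρ + s) :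
    |x - max (p - (ρ - s)) (min x (p + (ρ - s)))| ≤ 2 * s ∧
    |max (p - (ρ - s)) (min x (p + (ρ - s))) - p| ≤ ρ - s := by
  rcases abs_le.1 hx with ⟨h1, h2⟩
  rcases le_total x (p - (ρ - s)) with hxl | hxl
  · rw [min_eq_left (by linarith), max_eq_left (by linarith)]
    constructor <;> rw [abs_le] <;> constructor <;> linarith
  · rcases le_total x (p + (ρ - s)) with hxr | hxr
    · rw [min_eq_left hxr, max_eq_right hxl]
      constructor <;> rw [abs_le] <;> constructor <;> linarith
    · rw [min_eq_right hxr, max_eq_right (by linarith)]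
      constructor <;> rw [abs_le] <;> constructor <;> linarith

lemma heat_lb (τ ε : ℝ) (hτ : 0 < τ) (hε : 0 ≤ ε) (h : ℝ × ℝ → ℝ)
    (hc : Continuous h) (h0 : ∀ y, 0 ≤ h y) (hb : ∀ y, h y ≤ ε)
    (x z : ℝ × ℝ)
    (hz : ∀ y : ℝ × ℝ, |y.1 - z.1| ≤ Real.sqrt τ → |y.2 - z.2| ≤ Real.sqrt τ → ε ≤ h y)
    (hx1 : |x.1 - z.1| ≤ 2 * Real.sqrt τ) (hx2 : |x.2 - z.2| ≤ 2 * Real.sqrt τ) :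
    ε * (Real.exp (-(9/2 : ℝ)) / Real.pi) ≤ heatOp τ h x := by
  have hπ := Real.pi_pos
  set s := Real.sqrt τ with hs_def
  have hs : 0 < s := Real.sqrt_pos.2 hτ
  have hs2 : s ^ 2 = τ := Real.sq_sqrt hτ.le
  set F : ℝ × ℝ → ℝ := fun y => (4 * Real.pi * τ)⁻¹ *
    Real.exp (-((x.1 - y.1) ^ 2 + (x.2 - y.2) ^ 2) / (4 * τ)) * h y with hF_def
  have hden : (0:ℝ) < 4 * Real.pi * τ := by positivity
  have hF0 : ∀ y, 0 ≤ F y := fun y => by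
    apply mul_nonneg (mul_nonneg (by positivity) (Real.exp_nonneg _)) (h0 y)
  -- integrability
  have hint : Integrable F := by
    have h1 : Integrable (fun u : ℝ => Real.exp (-(4*τ)⁻¹ * (u - x.1) ^ 2)) :=
      (integrable_exp_neg_mul_sq (by positivity)).comp_sub_right x.1
    have h2 : Integrable (fun u : ℝ => Real.exp (-(4*τ)⁻¹ * (u - x.2) ^ 2)) :=
      (integrable_exp_neg_mul_sq (by positivity)).comp_sub_right x.2
    have hprod : Integrable (fun y : ℝ × ℝ =>
        Real.exp (-(4*τ)⁻¹ * (y.1 - x.1) ^ 2) * Real.exp (-(4*τ)⁻¹ * (y.2 - x.2) ^ 2)) := by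
      rw [MeasureTheory.Measure.volume_eq_prod]
      exact h1.mul_prod h2
    have hM : Integrable (fun y : ℝ × ℝ => (ε * (4 * Real.pi * τ)⁻¹) *
        (Real.exp (-(4*τ)⁻¹ * (y.1 - x.1) ^ 2) * Real.exp (-(4*τ)⁻¹ * (y.2 - x.2) ^ 2))) :=
      hprod.const_mul _
    apply hM.mono'
    · exact (Continuous.mul (by fun_prop) hc).aestronglyMeasurable
    · filter_upwards with y
      rw [Real.norm_eq_abs, abs_of_nonneg (hF0 y)]
      have hexp : Real.exp (-((x.1 - y.1) ^ 2 + (x.2 - y.2) ^ 2) / (4 * τ)) =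
          Real.exp (-(4*τ)⁻¹ * (y.1 - x.1) ^ 2) * Real.exp (-(4*τ)⁻¹ * (y.2 - x.2) ^ 2) := by
        rw [← Real.exp_add]; ring_nf
      have := hb y
      calc F y ≤ (4 * Real.pi * τ)⁻¹ *
          Real.exp (-((x.1 - y.1) ^ 2 + (x.2 - y.2) ^ 2) / (4 * τ)) * ε := by
            apply mul_le_mul_of_nonneg_left (hb y) (by positivity)
        _ = (ε * (4 * Real.pi * τ)⁻¹) *
            (Real.exp (-(4*τ)⁻¹ * (y.1 - x.1) ^ 2) * Real.exp (-(4*τ)⁻¹ * (y.2 - x.2) ^ 2)) := by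
            rw [hexp]; ring
  -- the square
  set Q : Set (ℝ × ℝ) := (Set.Icc (z.1 - s) (z.1 + s)) ×ˢ (Set.Icc (z.2 - s) (z.2 + s)) with hQ_def
  have hQm : MeasurableSet Q := (measurableSet_Icc).prod measurableSet_Icc
  have hvol : volume Q = ENNReal.ofReal (2*s) * ENNReal.ofReal (2*s) := by
    rw [hQ_def, MeasureTheory.Measure.volume_eq_prod, Measure.prod_prod, Real.volume_Icc, Real.volume_Icc]
    congr 1 <;> congr 1 <;> ring
  have hvol_ne : volume Q ≠ ⊤ := by rw [hvol]; exact ENNReal.mul_ne_top ENNReal.ofReal_ne_top ENNReal.ofReal_ne_top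
  have hvolR : (volume Q).toReal = 4 * τ := by
    rw [hvol, ENNReal.toReal_mul, ENNReal.toReal_ofReal (by positivity)]
    rw [← hs2]; ring
  set c : ℝ := ε * ((4 * Real.pi * τ)⁻¹ * Real.exp (-(9/2 : ℝ))) with hc_def
  have hlow : ∀ y ∈ Q, c ≤ F y := by
    rintro y ⟨hy1, hy2⟩
    simp only [Set.mem_Icc] at hy1 hy2
    have a1 : |y.1 - z.1| ≤ s := abs_le.2 ⟨by linarith [hy1.1], by linarith [hy1.2]⟩
    have a2 : |y.2 - z.2| ≤ s := abs_le.2 ⟨by linarith [hy2.1], by linarith [hy2.2]⟩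
    have d1 : |x.1 - y.1| ≤ 3 * s := by
      calc |x.1 - y.1| = |(x.1 - z.1) + (z.1 - y.1)| := by ring_nf
        _ ≤ |x.1 - z.1| + |z.1 - y.1| := abs_add_le _ _
        _ ≤ 2*s + s := by rw [abs_sub_comm z.1 y.1]; linarith [a1]
        _ = 3 * s := by ring
    have d2 : |x.2 - y.2| ≤ 3 * s := by
      calc |x.2 - y.2| = |(x.2 - z.2) + (z.2 - y.2)| := by ring_nf
        _ ≤ |x.2 - z.2| + |z.2 - y.2| := abs_add_le _ _
        _ ≤ 2*s + s := by rw [abs_sub_comm z.2 y.2]; linarith [a2]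
        _ = 3 * s := by ring
    have sq1 : (x.1 - y.1) ^ 2 ≤ 9 * τ := by
      calc (x.1 - y.1) ^ 2 ≤ (3*s) ^ 2 := sq_le_sq' (neg_le_of_abs_le d1) (le_of_abs_le d1)
        _ = 9 * τ := by rw [← hs2]; ring
    have sq2 : (x.2 - y.2) ^ 2 ≤ 9 * τ := by
      calc (x.2 - y.2) ^ 2 ≤ (3*s) ^ 2 := sq_le_sq' (neg_le_of_abs_le d2) (le_of_abs_le d2)
        _ = 9 * τ := by rw [← hs2]; ring
    have hexp_ge : Real.exp (-(9/2 : ℝ)) ≤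
        Real.exp (-((x.1 - y.1) ^ 2 + (x.2 - y.2) ^ 2) / (4 * τ)) := by
      apply Real.exp_le_exp.2
      rw [neg_div, neg_le_neg_iff, div_le_iff₀ (by positivity : (0:ℝ) < 4*τ)]
      linarith
    calc c = ((4 * Real.pi * τ)⁻¹ * Real.exp (-(9/2 : ℝ))) * ε := by rw [hc_def]; ring
      _ ≤ ((4 * Real.pi * τ)⁻¹ *
            Real.exp (-((x.1 - y.1) ^ 2 + (x.2 - y.2) ^ 2) / (4 * τ))) * h y := by
          apply mul_le_mul (mul_le_mul_of_nonneg_left hexp_ge (by positivity)) (hz y a1 a2) hε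
          positivity
      _ = F y := rfl
  calc ε * (Real.exp (-(9/2 : ℝ)) / Real.pi) = c * (volume Q).toReal := by
        rw [hc_def, hvolR]; field_simp
    _ ≤ ∫ y in Q, F y := setIntegral_ge_of_const_le_real hQm hvol_ne hlow hint.integrableOn
    _ ≤ ∫ y, F y := setIntegral_le_integral hint (Filter.Eventually.of_forall hF0)
    _ = heatOp τ h x := rfl


/-- a strong maximum principle for two-parameter positive linear
semigroups on continuous periodic functions that are close to the heat
semigroup. -/
theorem stmt_4 (T θ C : ℝ) (hT : 0 < T) (hθ : 0 < θ) (hC : 0 ≤ C)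
    (P : ℝ → ℝ → (ℝ × ℝ → ℝ) → (ℝ × ℝ → ℝ))
    -- `P s t` maps `𝒞` into `𝒞`
    (hmaps : ∀ s t : ℝ, 0 ≤ s → s ≤ t → t ≤ T → ∀ f, PerCont f → PerCont (P s t f))
    -- `P s t` is linear
    (hlin : ∀ s t : ℝ, 0 ≤ s → s ≤ t → t ≤ T → ∀ f g, PerCont f → PerCont g →
      ∀ a b : ℝ, P s t (fun x => a * f x + b * g x)
        = fun x => a * P s t f x + b * P s t g x)
    -- (i) `P s s = Id` and the two-parameter semigroup property
    (hid : ∀ s : ℝ, 0 ≤ s → s ≤ T → ∀ f, PerCont f → P s s f = f)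
    (hsemi : ∀ s t u : ℝ, 0 ≤ s → s ≤ t → t ≤ u → u ≤ T → ∀ f, PerCont f →
      P t u (P s t f) = P s u f)
    -- (ii) positivity
    (hpos : ∀ s t : ℝ, 0 ≤ s → s ≤ t → t ≤ T → ∀ f, PerCont f →
      (∀ x, 0 ≤ f x) → ∀ x, 0 ≤ P s t f x)
    -- (iii) closeness to the heat semigroup
    (hnear : ∀ s t : ℝ, 0 ≤ s → s < t → t ≤ T → ∀ f, PerCont f →
      ∀ x, |P s t f x - heatOp (t - s) f x| ≤ C * (t - s) ^ θ * supNorm f) :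
    ∀ f, PerCont f → (∀ x, 0 ≤ f x) → (∃ x, f x ≠ 0) →
      ∀ t : ℝ, 0 < t → t ≤ T → ∀ x, 0 < P 0 t f x := by
  intro f hf hf0 hfne t ht htT x
  obtain ⟨w, hw⟩ := hfne
  have hπ := Real.pi_pos
  have hfw : 0 < f w := (hf0 w).lt_of_ne (Ne.symm hw)
  set ε₀ : ℝ := f w / 2 with hε₀def
  have hε₀ : 0 < ε₀ := by positivity
  rcases Metric.continuousAt_iff.1 (hf.1.continuousAt (x := w)) ε₀ hε₀ with ⟨ρ', hρ', hball⟩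
  set ρ₀ : ℝ := ρ' / 2 with hρ₀def
  have hρ₀ : 0 < ρ₀ := by positivity
  have hinit : ∀ y : ℝ × ℝ, |y.1 - w.1| ≤ ρ₀ → |y.2 - w.2| ≤ ρ₀ → ε₀ ≤ f y := by
    intro y h1 h2
    have hd : dist y w < ρ' := by
      rw [Prod.dist_eq]
      apply max_lt <;> rw [Real.dist_eq] <;> linarith
    have hb := hball hd
    rw [Real.dist_eq, abs_lt] at hb
    have := hb.1
    rw [hε₀def] at this ⊢
    linarith
  set c₀ : ℝ := Real.exp (-(9/2 : ℝ)) / Real.pi with hc₀def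
  have hc₀ : 0 < c₀ := by positivity
  have hC1 : (0:ℝ) < C + 1 := by linarith
  have hbase : 0 < c₀ / (2 * (C + 1)) := by positivity
  set δ : ℝ := (c₀ / (2 * (C + 1))) ^ (1/θ) with hδdef
  have hδ : 0 < δ := Real.rpow_pos_of_pos hbase _
  have hδθ : δ ^ θ = c₀ / (2 * (C + 1)) := by
    rw [hδdef, ← Real.rpow_mul hbase.le, one_div_mul_cancel hθ.ne', Real.rpow_one]
  obtain ⟨n, hn⟩ := exists_nat_gt
    (max (max (t / ρ₀ ^ 2) (Real.pi ^ 2 / t)) (max 1 (t / δ)))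
  have hA : t / ρ₀ ^ 2 < n := lt_of_le_of_lt (le_trans (le_max_left _ _) (le_max_left _ _)) hn
  have hB : Real.pi ^ 2 / t < n := lt_of_le_of_lt (le_trans (le_max_right _ _) (le_max_left _ _)) hn
  have hone : (1:ℝ) < n := lt_of_le_of_lt (le_trans (le_max_left _ _) (le_max_right _ _)) hn
  have hD : t / δ < n := lt_of_le_of_lt (le_trans (le_max_right _ _) (le_max_right _ _)) hn
  have hnpos : (0:ℝ) < n := by linarith
  set τ : ℝ := t / n with hτdef
  have hτ : 0 < τ := div_pos ht hnpos
  have hnτ : (n:ℝ) * τ = t := by rw [hτdef]; field_simp [hnpos.ne']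
  set s : ℝ := Real.sqrt τ with hsdef
  have hs : 0 < s := Real.sqrt_pos.2 hτ
  have hs2 : s ^ 2 = τ := Real.sq_sqrt hτ.le
  have hsρ : s ≤ ρ₀ := by
    have h1 : t < n * ρ₀ ^ 2 := by
      rw [div_lt_iff₀ (by positivity)] at hA; linarith
    have h2 : τ ≤ ρ₀ ^ 2 := by rw [hτdef, div_le_iff₀ hnpos]; linarith
    calc s = Real.sqrt τ := hsdef
      _ ≤ Real.sqrt (ρ₀ ^ 2) := Real.sqrt_le_sqrt h2
      _ = ρ₀ := Real.sqrt_sq hρ₀.le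
  have herr : C * τ ^ θ ≤ c₀ / 2 := by
    have hτδ : τ ≤ δ := by
      rw [div_lt_iff₀ hδ] at hD
      rw [hτdef, div_le_iff₀ hnpos]; linarith
    have h1 : τ ^ θ ≤ δ ^ θ := Real.rpow_le_rpow hτ.le hτδ hθ.le
    rw [hδθ] at h1
    have h2 : C * τ ^ θ ≤ C * (c₀ / (2 * (C + 1))) := mul_le_mul_of_nonneg_left h1 hC
    have h3 : C * (c₀ / (2 * (C + 1))) = c₀ / 2 * (C / (C + 1)) := by
      field_simp
    have h4 : C / (C + 1) ≤ 1 := by rw [div_le_one hC1]; linarith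
    have h5 : c₀ / 2 * (C / (C + 1)) ≤ c₀ / 2 * 1 :=
      mul_le_mul_of_nonneg_left h4 (by positivity)
    rw [h3] at h2; linarith
  have hτθ0 : (0:ℝ) ≤ τ ^ θ := Real.rpow_nonneg hτ.le θ
  have hcover : Real.pi ≤ (n:ℝ) * s := by
    have h1 : Real.pi ^ 2 ≤ (n:ℝ) * t := by
      rw [div_lt_iff₀ ht] at hB; linarith
    have h3 : (n:ℝ) ^ 2 * τ = n * t := by rw [hτdef]; field_simp
    have h2 : (n:ℝ) * s = Real.sqrt ((n:ℝ) ^ 2 * τ) := by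
      rw [Real.sqrt_mul (sq_nonneg _), Real.sqrt_sq hnpos.le, hsdef]
    rw [h2, h3]
    calc Real.pi = Real.sqrt (Real.pi ^ 2) := (Real.sqrt_sq hπ.le).symm
      _ ≤ Real.sqrt ((n:ℝ) * t) := Real.sqrt_le_sqrt h1
  -- monotonicity of P
  have mono : ∀ a b : ℝ, 0 ≤ a → a ≤ b → b ≤ T → ∀ u v, PerCont u → PerCont v →
      (∀ y, u y ≤ v y) → ∀ y, P a b u y ≤ P a b v y := by
    intro a b ha hab hbT u v hu hv huv y
    have hd : PerCont (fun q => (1:ℝ) * v q + (-1) * u q) := by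
      refine ⟨(continuous_const.mul hv.1).add (continuous_const.mul hu.1), ?_⟩
      intro k₁ k₂ q₁ q₂
      simp only [hv.2 k₁ k₂ q₁ q₂, hu.2 k₁ k₂ q₁ q₂]
    have h0 : ∀ q, 0 ≤ (1:ℝ) * v q + (-1) * u q := by
      intro q; have := huv q; linarith
    have hp := hpos a b ha hab hbT _ hd h0 y
    rw [hlin a b ha hab hbT v u hv hu 1 (-1)] at hp
    simp only at hp
    linarith
  have hsup : ∀ (h : ℝ × ℝ → ℝ) (ε : ℝ), (∀ y, 0 ≤ h y) → (∀ y, h y ≤ ε) →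
      supNorm h ≤ ε := by
    intro h ε h0 hb
    apply ciSup_le
    intro y
    rw [abs_of_nonneg (h0 y)]
    exact hb y
  -- main induction
  have key : ∀ k : ℕ, k ≤ n → PerCont (P 0 ((k:ℝ) * τ) f) ∧ (∀ y, 0 ≤ P 0 ((k:ℝ) * τ) f y) ∧
      ∀ (y : ℝ × ℝ) (p₁ p₂ : ℤ), |y.1 - (w.1 + 2 * Real.pi * p₁)| ≤ ρ₀ + k * s →
        |y.2 - (w.2 + 2 * Real.pi * p₂)| ≤ ρ₀ + k * s →
        ε₀ * (c₀/2) ^ k ≤ P 0 ((k:ℝ) * τ) f y := by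
    intro k
    induction k with
    | zero =>
      intro _
      have h00 : ((0:ℕ):ℝ) * τ = 0 := by norm_num
      rw [h00, hid 0 le_rfl hT.le f hf]
      refine ⟨hf, hf0, ?_⟩
      intro y p₁ p₂ h1 h2
      simp only [Nat.cast_zero, zero_mul, add_zero, pow_zero, mul_one] at h1 h2 ⊢
      have hper := hf.2 p₁ p₂ (y.1 - 2 * Real.pi * p₁) (y.2 - 2 * Real.pi * p₂)
      have e1 : y.1 - 2 * Real.pi * p₁ + 2 * Real.pi * p₁ = y.1 := by ring
      have e2 : y.2 - 2 * Real.pi * p₂ + 2 * Real.pi * p₂ = y.2 := by ring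
      rw [e1, e2, Prod.mk.eta] at hper
      rw [hper]
      apply hinit
      · show |y.1 - 2 * Real.pi * p₁ - w.1| ≤ ρ₀
        rw [show y.1 - 2 * Real.pi * (p₁:ℝ) - w.1 = y.1 - (w.1 + 2 * Real.pi * p₁) by ring]
        exact h1
      · show |y.2 - 2 * Real.pi * p₂ - w.2| ≤ ρ₀
        rw [show y.2 - 2 * Real.pi * (p₂:ℝ) - w.2 = y.2 - (w.2 + 2 * Real.pi * p₂) by ring]
        exact h2
    | succ k ih =>
      intro hk1
      obtain ⟨ihP, ih0, ihB⟩ := ih (Nat.le_of_succ_le hk1)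
      simp only [Nat.cast_succ]
      set g := P 0 ((k:ℝ) * τ) f with hgdef
      have ht0k : (0:ℝ) ≤ (k:ℝ) * τ := by positivity
      have hkk1 : (k:ℝ) * τ ≤ ((k:ℝ) + 1) * τ := mul_le_mul_of_nonneg_right (by linarith) hτ.le
      have hk1n : (k:ℝ) + 1 ≤ (n:ℝ) := by exact_mod_cast hk1
      have hk1t : ((k:ℝ) + 1) * τ ≤ t := by
        rw [← hnτ]; exact mul_le_mul_of_nonneg_right hk1n hτ.le
      have hk1T : ((k:ℝ) + 1) * τ ≤ T := le_trans hk1t htT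
      have hklt : (k:ℝ) * τ < ((k:ℝ) + 1) * τ := mul_lt_mul_of_pos_right (by linarith) hτ
      have hdiff : ((k:ℝ) + 1) * τ - (k:ℝ) * τ = τ := by ring
      set εk : ℝ := ε₀ * (c₀/2) ^ k with hεkdef
      have hεk : 0 < εk := by positivity
      set h : ℝ × ℝ → ℝ := fun y => min (g y) εk with hhdef
      have hhP : PerCont h := by
        refine ⟨ihP.1.min continuous_const, ?_⟩
        intro k₁ k₂ a b
        simp only [hhdef]
        rw [ihP.2 k₁ k₂ a b]
      have hh0 : ∀ y, 0 ≤ h y := fun y => le_min (ih0 y) hεk.le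
      have hhb : ∀ y, h y ≤ εk := fun y => min_le_right _ _
      have hPgP : PerCont (P 0 (((k:ℝ) + 1) * τ) f) :=
        hmaps 0 _ le_rfl (by positivity) hk1T f hf
      have hPg0 : ∀ y, 0 ≤ P 0 (((k:ℝ) + 1) * τ) f y :=
        hpos 0 _ le_rfl (by positivity) hk1T f hf hf0
      refine ⟨hPgP, hPg0, ?_⟩
      intro y p₁ p₂ hy1 hy2
      set ρ : ℝ := ρ₀ + k * s with hρdef
      have hks : (0:ℝ) ≤ (k:ℝ) * s := by positivity
      have hρs : s ≤ ρ := by rw [hρdef]; linarith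
      have hy1' : |y.1 - (w.1 + 2 * Real.pi * p₁)| ≤ ρ + s := by
        rw [hρdef]; rw [show ρ₀ + k * s + s = ρ₀ + ((k:ℝ) + 1) * s by ring]; exact hy1
      have hy2' : |y.2 - (w.2 + 2 * Real.pi * p₂)| ≤ ρ + s := by
        rw [hρdef]; rw [show ρ₀ + k * s + s = ρ₀ + ((k:ℝ) + 1) * s by ring]; exact hy2
      obtain ⟨c1a, c1b⟩ := clamp_lem y.1 (w.1 + 2 * Real.pi * p₁) ρ s hs.le hρs hy1'
      obtain ⟨c2a, c2b⟩ := clamp_lem y.2 (w.2 + 2 * Real.pi * p₂) ρ s hs.le hρs hy2'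
      set z : ℝ × ℝ := (max (w.1 + 2 * Real.pi * p₁ - (ρ - s)) (min y.1 (w.1 + 2 * Real.pi * p₁ + (ρ - s))),
        max (w.2 + 2 * Real.pi * p₂ - (ρ - s)) (min y.2 (w.2 + 2 * Real.pi * p₂ + (ρ - s)))) with hzdef
      have hz : ∀ u : ℝ × ℝ, |u.1 - z.1| ≤ Real.sqrt τ → |u.2 - z.2| ≤ Real.sqrt τ → εk ≤ h u := by
        intro u u1 u2
        rw [← hsdef] at u1 u2
        have b1 : |u.1 - (w.1 + 2 * Real.pi * p₁)| ≤ ρ₀ + k * s := by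
          calc |u.1 - (w.1 + 2 * Real.pi * p₁)|
              = |(u.1 - z.1) + (z.1 - (w.1 + 2 * Real.pi * p₁))| := by ring_nf
            _ ≤ |u.1 - z.1| + |z.1 - (w.1 + 2 * Real.pi * p₁)| := abs_add_le _ _
            _ ≤ s + (ρ - s) := add_le_add u1 c1b
            _ = ρ₀ + k * s := by rw [hρdef]; ring
        have b2 : |u.2 - (w.2 + 2 * Real.pi * p₂)| ≤ ρ₀ + k * s := by
          calc |u.2 - (w.2 + 2 * Real.pi * p₂)|
              = |(u.2 - z.2) + (z.2 - (w.2 + 2 * Real.pi * p₂))| := by ring_nf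
            _ ≤ |u.2 - z.2| + |z.2 - (w.2 + 2 * Real.pi * p₂)| := abs_add_le _ _
            _ ≤ s + (ρ - s) := add_le_add u2 c2b
            _ = ρ₀ + k * s := by rw [hρdef]; ring
        exact le_min (ihB u p₁ p₂ b1 b2) le_rfl
      have hheat : εk * c₀ ≤ heatOp τ h y := by
        have := heat_lb τ εk hτ hεk.le h hhP.1 hh0 hhb y z hz
          (by rw [← hsdef]; exact c1a) (by rw [← hsdef]; exact c2a)
        rw [hc₀def]
        exact this
      have hnear' := hnear ((k:ℝ) * τ) (((k:ℝ) + 1) * τ) ht0k hklt hk1T h hhP y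
      rw [hdiff] at hnear'
      have hsupb : supNorm h ≤ εk := hsup h εk hh0 hhb
      have hsup0 : 0 ≤ supNorm h := Real.iSup_nonneg (fun y => abs_nonneg _)
      have e2 : C * τ ^ θ * supNorm h ≤ c₀ / 2 * εk := by
        calc C * τ ^ θ * supNorm h ≤ c₀ / 2 * supNorm h :=
            mul_le_mul_of_nonneg_right herr hsup0
          _ ≤ c₀ / 2 * εk := mul_le_mul_of_nonneg_left hsupb (by positivity)
      have habs := (abs_le.1 hnear').1
      have hPh : εk * (c₀/2) ≤ P ((k:ℝ) * τ) (((k:ℝ) + 1) * τ) h y := by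
        linarith [hheat, habs, e2]
      have hmono := mono ((k:ℝ) * τ) (((k:ℝ) + 1) * τ) ht0k hkk1 hk1T h g hhP ihP
        (fun u => min_le_left _ _) y
      have hgsemi : P ((k:ℝ) * τ) (((k:ℝ) + 1) * τ) g = P 0 (((k:ℝ) + 1) * τ) f :=
        hsemi 0 ((k:ℝ) * τ) (((k:ℝ) + 1) * τ) le_rfl ht0k hkk1 hk1T f hf
      calc ε₀ * (c₀/2) ^ (k+1) = εk * (c₀/2) := by rw [hεkdef]; ring
        _ ≤ P ((k:ℝ) * τ) (((k:ℝ) + 1) * τ) h y := hPh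
        _ ≤ P ((k:ℝ) * τ) (((k:ℝ) + 1) * τ) g y := hmono
        _ = P 0 (((k:ℝ) + 1) * τ) f y := by rw [hgsemi]
  obtain ⟨-, -, hBnd⟩ := key n le_rfl
  have hround : ∀ (a b : ℝ), |a - (b + 2 * Real.pi * (round ((a - b) / (2 * Real.pi)) : ℤ))| ≤ ρ₀ + n * s := by
    intro a b
    set r : ℤ := round ((a - b) / (2 * Real.pi)) with hrdef
    have heq : a - (b + 2 * Real.pi * r) = (2 * Real.pi) * ((a - b) / (2 * Real.pi) - r) := by
      rw [mul_sub, mul_div_cancel₀ _ (ne_of_gt (by positivity : (0:ℝ) < 2 * Real.pi))]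
      ring
    rw [heq, abs_mul, abs_of_pos (by positivity : (0:ℝ) < 2 * Real.pi)]
    have hrb := abs_sub_round ((a - b) / (2 * Real.pi))
    have : 2 * Real.pi * |(a - b) / (2 * Real.pi) - r| ≤ 2 * Real.pi * (1/2) :=
      mul_le_mul_of_nonneg_left hrb (by positivity)
    calc 2 * Real.pi * |(a - b) / (2 * Real.pi) - r| ≤ 2 * Real.pi * (1/2) := this
      _ = Real.pi := by ring
      _ ≤ (n:ℝ) * s := hcover
      _ ≤ ρ₀ + n * s := by linarith
  have hfin : ε₀ * (c₀/2) ^ n ≤ P 0 ((n:ℝ) * τ) f x :=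
    hBnd x (round ((x.1 - w.1) / (2 * Real.pi))) (round ((x.2 - w.2) / (2 * Real.pi)))
      (hround x.1 w.1) (hround x.2 w.2)
  rw [hnτ] at hfin
  calc (0:ℝ) < ε₀ * (c₀/2) ^ n := by positivity
    _ ≤ P 0 t f x := hfin
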